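/- Let G and H be infinite finitely generated groups such that the Cayley graph of H has extendable geodesics (every geodesic segment from the identity extends to a longer geodesic segment). Then any two points (g₁,h₁), (g₂,h₂) on the n-sphere about the identity in the Cayley graph of G × H (with the product generating set) can be connected by a path of length at most 8n which avoids the open n-ball about the identity. Consequently, the divergence δ₁(r) of G × H satisfies δ₁(r) ≤ C₂r + C₂ for some constant C₂ ≥ 1. -/

import Mathlib

/-- Word length of `g` with respect to the (not necessarily symmetric) generating set `S`:
the least length of a word in `S ∪ S⁻¹` representing `g`. -/
noncomputable def wordLength {G : Type*} [Group G] (S : Set G) (g : G) : ℕ :=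
  sInf {n | ∃ l : List G, (∀ x ∈ l, x ∈ S ∨ x⁻¹ ∈ S) ∧ l.prod = g ∧ l.length = n}

/-- Adjacency in the Cayley graph of `(G, S)`. -/
def CayleyAdj {G : Type*} [Group G] (S : Set G) (x y : G) : Prop :=
  ∃ s : G, (s ∈ S ∨ s⁻¹ ∈ S) ∧ y = x * s

/-- The product generating set of `G × H` coming from generating sets of the factors. -/
def prodGenSet {G H : Type*} [Group G] [Group H] (SG : Set G) (SH : Set H) :
    Set (G × H) :=
  (fun g : G => ((g, 1) : G × H)) '' SG ∪ (fun h : H => ((1, h) : G × H)) '' SH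

section Basic
variable {G : Type*} [Group G] {S : Set G}

/-- Every element is represented by some word. -/
def HasWords (S : Set G) : Prop :=
  ∀ g : G, ∃ l : List G, (∀ x ∈ l, x ∈ S ∨ x⁻¹ ∈ S) ∧ l.prod = g

lemma hasWords_of_closure (hgen : Subgroup.closure S = ⊤) : HasWords S := by
  intro g
  have hg : g ∈ Subgroup.closure S := hgen ▸ Subgroup.mem_top g
  induction hg using Subgroup.closure_induction with
  | mem x hx => exact ⟨[x], by simp [hx], by simp⟩
  | one => exact ⟨[], by simp, by simp⟩
  | mul x y _ _ ihx ihy =>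
    obtain ⟨l₁, hl₁, hp₁⟩ := ihx
    obtain ⟨l₂, hl₂, hp₂⟩ := ihy
    refine ⟨l₁ ++ l₂, ?_, by simp [hp₁, hp₂]⟩
    intro z hz
    rcases List.mem_append.mp hz with h | h
    exacts [hl₁ z h, hl₂ z h]
  | inv x _ ihx =>
    obtain ⟨l, hl, hp⟩ := ihx
    refine ⟨(l.map (·⁻¹)).reverse, ?_, ?_⟩
    · intro z hz
      simp only [List.mem_reverse, List.mem_map] at hz
      obtain ⟨y, hy, rfl⟩ := hz
      rcases hl y hy with h | h
      · exact Or.inr (by simpa using h)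
      · exact Or.inl h
    · rw [← List.prod_inv_reverse, hp]

lemma wordLength_le {l : List G} (hl : ∀ x ∈ l, x ∈ S ∨ x⁻¹ ∈ S) :
    wordLength S l.prod ≤ l.length :=
  Nat.sInf_le ⟨l, hl, rfl, rfl⟩

lemma exists_word (hS : HasWords S) (g : G) :
    ∃ l : List G, (∀ x ∈ l, x ∈ S ∨ x⁻¹ ∈ S) ∧ l.prod = g ∧
      l.length = wordLength S g := by
  obtain ⟨l, hl, hp⟩ := hS g
  have : wordLength S g ∈
      {n | ∃ l : List G, (∀ x ∈ l, x ∈ S ∨ x⁻¹ ∈ S) ∧ l.prod = g ∧ l.length = n} :=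
    Nat.sInf_mem ⟨l.length, l, hl, hp, rfl⟩
  obtain ⟨l', h1, h2, h3⟩ := this
  exact ⟨l', h1, h2, h3⟩

lemma wordLength_one : wordLength S (1 : G) = 0 :=
  Nat.le_zero.mp (by simpa using wordLength_le (S := S) (l := []) (by simp))

lemma wordLength_mul_le (hS : HasWords S) (g h : G) :
    wordLength S (g * h) ≤ wordLength S g + wordLength S h := by
  obtain ⟨l₁, hl₁, hp₁, hn₁⟩ := exists_word hS g
  obtain ⟨l₂, hl₂, hp₂, hn₂⟩ := exists_word hS h
  have hw : ∀ x ∈ l₁ ++ l₂, x ∈ S ∨ x⁻¹ ∈ S := by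
    intro z hz
    rcases List.mem_append.mp hz with h | h
    exacts [hl₁ z h, hl₂ z h]
  have := wordLength_le hw
  rw [List.prod_append, hp₁, hp₂] at this
  simpa [hn₁, hn₂] using this

lemma wordLength_inv_le (hS : HasWords S) (g : G) :
    wordLength S g⁻¹ ≤ wordLength S g := by
  obtain ⟨l, hl, hp, hn⟩ := exists_word hS g
  have hw : ∀ x ∈ (l.map (·⁻¹)).reverse, x ∈ S ∨ x⁻¹ ∈ S := by
    intro z hz
    simp only [List.mem_reverse, List.mem_map] at hz
    obtain ⟨y, hy, rfl⟩ := hz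
    rcases hl y hy with h | h
    · exact Or.inr (by simpa using h)
    · exact Or.inl h
  have := wordLength_le hw
  rw [← List.prod_inv_reverse, hp] at this
  simpa [hn] using this

lemma wordLength_inv (hS : HasWords S) (g : G) :
    wordLength S g⁻¹ = wordLength S g :=
  le_antisymm (wordLength_inv_le hS g) (by simpa using wordLength_inv_le hS g⁻¹)

end Basic

section Prod
variable {G H : Type*} [Group G] [Group H] {SG : Set G} {SH : Set H}

lemma isWord_map_inl {w : List G} (hw : ∀ x ∈ w, x ∈ SG ∨ x⁻¹ ∈ SG) :
    ∀ x ∈ w.map (MonoidHom.inl G H), x ∈ prodGenSet SG SH ∨ x⁻¹ ∈ prodGenSet SG SH := by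
  intro x hx
  simp only [List.mem_map] at hx
  obtain ⟨s, hs, rfl⟩ := hx
  rcases hw s hs with h | h
  · exact Or.inl (Or.inl ⟨s, h, rfl⟩)
  · refine Or.inr (Or.inl ⟨s⁻¹, h, ?_⟩)
    simp [MonoidHom.inl_apply, Prod.ext_iff]

lemma isWord_map_inr {w : List H} (hw : ∀ x ∈ w, x ∈ SH ∨ x⁻¹ ∈ SH) :
    ∀ x ∈ w.map (MonoidHom.inr G H), x ∈ prodGenSet SG SH ∨ x⁻¹ ∈ prodGenSet SG SH := by
  intro x hx
  simp only [List.mem_map] at hx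
  obtain ⟨s, hs, rfl⟩ := hx
  rcases hw s hs with h | h
  · exact Or.inl (Or.inr ⟨s, h, rfl⟩)
  · refine Or.inr (Or.inr ⟨s⁻¹, h, ?_⟩)
    simp [MonoidHom.inr_apply, Prod.ext_iff]

lemma HasWords.prodGen (hG : HasWords SG) (hH : HasWords SH) :
    HasWords (prodGenSet SG SH) := by
  rintro ⟨g, h⟩
  obtain ⟨l₁, hl₁, hp₁⟩ := hG g
  obtain ⟨l₂, hl₂, hp₂⟩ := hH h
  refine ⟨l₁.map (MonoidHom.inl G H) ++ l₂.map (MonoidHom.inr G H), ?_, ?_⟩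
  · intro z hz
    rcases List.mem_append.mp hz with hz | hz
    exacts [isWord_map_inl hl₁ z hz, isWord_map_inr hl₂ z hz]
  · rw [List.prod_append, List.prod_hom l₁ (MonoidHom.inl G H),
      List.prod_hom l₂ (MonoidHom.inr G H), hp₁, hp₂]
    simp [Prod.ext_iff]

lemma wordLength_prod_le (hG : HasWords SG) (hH : HasWords SH) (g : G) (h : H) :
    wordLength (prodGenSet SG SH) (g, h) ≤ wordLength SG g + wordLength SH h := by
  obtain ⟨l₁, hl₁, hp₁, hn₁⟩ := exists_word hG g
  obtain ⟨l₂, hl₂, hp₂, hn₂⟩ := exists_word hH h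
  have hw : ∀ x ∈ l₁.map (MonoidHom.inl G H) ++ l₂.map (MonoidHom.inr G H),
      x ∈ prodGenSet SG SH ∨ x⁻¹ ∈ prodGenSet SG SH := by
    intro z hz
    rcases List.mem_append.mp hz with hz | hz
    exacts [isWord_map_inl hl₁ z hz, isWord_map_inr hl₂ z hz]
  have := wordLength_le hw
  rw [List.prod_append, List.prod_hom l₁ (MonoidHom.inl G H),
    List.prod_hom l₂ (MonoidHom.inr G H), hp₁, hp₂] at this
  have heq : ((MonoidHom.inl G H) g * (MonoidHom.inr G H) h : G × H) = (g, h) := by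
    simp [Prod.ext_iff]
  rw [heq] at this
  simpa [hn₁, hn₂] using this

lemma wordLength_single {x : G} (hx : x ∈ SG ∨ x⁻¹ ∈ SG) : wordLength SG x ≤ 1 := by
  simpa using wordLength_le (S := SG) (l := [x]) (by simpa using hx)

lemma wordLength_prod_ge (hG : HasWords SG) (hH : HasWords SH) :
    ∀ l : List (G × H), (∀ x ∈ l, x ∈ prodGenSet SG SH ∨ x⁻¹ ∈ prodGenSet SG SH) →
      wordLength SG l.prod.1 + wordLength SH l.prod.2 ≤ l.length := by
  intro l
  induction l with
  | nil => simp [wordLength_one]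
  | cons x t ih =>
    intro hw
    have hx := hw x List.mem_cons_self
    have ht := ih (fun z hz => hw z (List.mem_cons_of_mem x hz))
    have hstep : (∃ s : G, (s ∈ SG ∨ s⁻¹ ∈ SG) ∧ x = (s, 1)) ∨
        (∃ s : H, (s ∈ SH ∨ s⁻¹ ∈ SH) ∧ x = (1, s)) := by
      rcases hx with hx | hx
      · rcases hx with ⟨s, hs, rfl⟩ | ⟨s, hs, rfl⟩
        · exact Or.inl ⟨s, Or.inl hs, rfl⟩
        · exact Or.inr ⟨s, Or.inl hs, rfl⟩
      · rcases hx with ⟨s, hs, hxs⟩ | ⟨s, hs, hxs⟩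
        · refine Or.inl ⟨s⁻¹, Or.inr (by simpa using hs), ?_⟩
          have hx' : x⁻¹ = ((s, 1) : G × H) := hxs.symm
          have : x = ((s, 1) : G × H)⁻¹ := by rw [← hx']; simp
          simpa [Prod.ext_iff] using this
        · refine Or.inr ⟨s⁻¹, Or.inr (by simpa using hs), ?_⟩
          have hx' : x⁻¹ = ((1, s) : G × H) := hxs.symm
          have : x = ((1, s) : G × H)⁻¹ := by rw [← hx']; simp
          simpa [Prod.ext_iff] using this
    rcases hstep with ⟨s, hs, rfl⟩ | ⟨s, hs, rfl⟩
    · have h1 : wordLength SG (s * t.prod.1) ≤ 1 + wordLength SG t.prod.1 := by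
        calc wordLength SG (s * t.prod.1)
            ≤ wordLength SG s + wordLength SG t.prod.1 := wordLength_mul_le hG _ _
          _ ≤ 1 + wordLength SG t.prod.1 := by
              have := wordLength_single hs; omega
      simp only [List.prod_cons, List.length_cons, Prod.fst_mul, Prod.snd_mul]
      simp only [one_mul]
      omega
    · have h1 : wordLength SH (s * t.prod.2) ≤ 1 + wordLength SH t.prod.2 := by
        calc wordLength SH (s * t.prod.2)
            ≤ wordLength SH s + wordLength SH t.prod.2 := wordLength_mul_le hH _ _
          _ ≤ 1 + wordLength SH t.prod.2 := by
              have := wordLength_single (SG := SH) hs; omega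
      simp only [List.prod_cons, List.length_cons, Prod.fst_mul, Prod.snd_mul]
      simp only [one_mul]
      omega

lemma wordLength_prod (hG : HasWords SG) (hH : HasWords SH) (g : G) (h : H) :
    wordLength (prodGenSet SG SH) (g, h) = wordLength SG g + wordLength SH h := by
  refine le_antisymm (wordLength_prod_le hG hH g h) ?_
  obtain ⟨l, hl, hp, hn⟩ := exists_word (hG.prodGen hH) (g, h)
  have h2 := wordLength_prod_ge hG hH l hl
  rw [hp] at h2
  simp only at h2
  omega

end Prod

section Sphere
variable {G : Type*} [Group G] {S : Set G}

lemma ball_finite (hS : HasWords S) (hfin : S.Finite) (m : ℕ) :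
    {g : G | wordLength S g ≤ m}.Finite := by
  set T : Set G := S ∪ S⁻¹ with hT
  have hTfin : T.Finite := hfin.union hfin.inv
  haveI : Finite T := hTfin
  have hlists : {L : List T | L.length ≤ m}.Finite := List.finite_length_le ↥T m
  have himage : {g : G | wordLength S g ≤ m} ⊆
      (fun L : List T => (L.map Subtype.val).prod) '' {L : List T | L.length ≤ m} := by
    intro g hg
    obtain ⟨l, hl, hp, hn⟩ := exists_word hS g
    have hg' : wordLength S g ≤ m := hg
    have hmem : ∀ x ∈ l, x ∈ T := by
      intro x hx
      rcases hl x hx with h | h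
      · exact Or.inl h
      · exact Or.inr (Set.mem_inv.mpr (by simpa using h))
    refine ⟨l.pmap (fun x hx => (⟨x, hx⟩ : T)) hmem, ?_, ?_⟩
    · simp only [Set.mem_setOf_eq, List.length_pmap]
      omega
    · show (List.map Subtype.val (l.pmap (fun x hx => (⟨x, hx⟩ : T)) hmem)).prod = g
      have hmv : (l.pmap (fun x hx => (⟨x, hx⟩ : T)) hmem).map Subtype.val = l := by
        clear hp hl hn hg hg'
        induction l with
        | nil => rfl
        | cons a t ih => simp [ih]
      rw [hmv, hp]
  exact (hlists.image _).subset himage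

lemma exists_wordLength_eq [Infinite G] (hS : HasWords S) (hfin : S.Finite) (n : ℕ) :
    ∃ g : G, wordLength S g = n := by
  have hbig : ∃ g : G, n ≤ wordLength S g := by
    by_contra hcon
    push_neg at hcon
    have : (Set.univ : Set G).Finite := by
      refine (ball_finite hS hfin n).subset ?_
      intro g _
      exact le_of_lt (hcon g)
    exact Set.infinite_univ this
  obtain ⟨g, hg⟩ := hbig
  obtain ⟨l, hl, hp, hn⟩ := exists_word hS g
  refine ⟨(l.take n).prod, ?_⟩
  have h1 : wordLength S (l.take n).prod ≤ n := by
    have := wordLength_le (S := S) (l := l.take n)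
      (fun x hx => hl x (List.mem_of_mem_take hx))
    have hlen : (l.take n).length = n := by
      rw [List.length_take]
      omega
    omega
  have h2 : n ≤ wordLength S (l.take n).prod := by
    have hsplit : (l.take n).prod * (l.drop n).prod = g := by
      rw [← List.prod_append, List.take_append_drop, hp]
    have hdl : (l.drop n).length = l.length - n := List.length_drop
    have hd : wordLength S (l.drop n).prod ≤ l.length - n := by
      have := wordLength_le (S := S) (l := l.drop n)
        (fun x hx => hl x (List.mem_of_mem_drop hx))
      omega
    have htri : wordLength S g ≤ wordLength S (l.take n).prod +
        wordLength S (l.drop n).prod := by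
      rw [← hsplit]
      exact wordLength_mul_le hS _ _
    omega
  omega

end Sphere

section Path
variable {G : Type*} [Group G] {S : Set G}

def pathFrom (x : G) : List G → List G
  | [] => [x]
  | s :: t => x :: pathFrom (x * s) t

lemma pathFrom_eq_cons (l : List G) (x : G) : ∃ r, pathFrom x l = x :: r := by
  cases l with
  | nil => exact ⟨[], rfl⟩
  | cons s t => exact ⟨pathFrom (x * s) t, rfl⟩

lemma head?_pathFrom (l : List G) (x : G) : (pathFrom x l).head? = some x := by
  obtain ⟨r, hr⟩ := pathFrom_eq_cons l x
  rw [hr]; rfl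

lemma length_pathFrom (l : List G) (x : G) : (pathFrom x l).length = l.length + 1 := by
  induction l generalizing x with
  | nil => rfl
  | cons s t ih => simp [pathFrom, ih]

lemma getLast?_pathFrom (l : List G) (x : G) :
    (pathFrom x l).getLast? = some (x * l.prod) := by
  induction l generalizing x with
  | nil => simp [pathFrom]
  | cons s t ih =>
    obtain ⟨r, hr⟩ := pathFrom_eq_cons t (x * s)
    show (x :: pathFrom (x * s) t).getLast? = _
    rw [hr, List.getLast?_cons_cons, ← hr, ih]
    rw [List.prod_cons, mul_assoc]

lemma chain'_pathFrom {l : List G} (hl : ∀ s ∈ l, s ∈ S ∨ s⁻¹ ∈ S) (x : G) :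
    (pathFrom x l).Chain' (CayleyAdj S) := by
  induction l generalizing x with
  | nil => exact List.isChain_singleton x
  | cons s t ih =>
    obtain ⟨r, hr⟩ := pathFrom_eq_cons t (x * s)
    show List.IsChain (CayleyAdj S) (x :: pathFrom (x * s) t)
    rw [hr, List.isChain_cons_cons, ← hr]
    exact ⟨⟨s, hl s List.mem_cons_self, rfl⟩,
      ih (fun z hz => hl z (List.mem_cons_of_mem s hz)) (x * s)⟩

lemma mem_pathFrom {l : List G} {x y : G} (hy : y ∈ pathFrom x l) :
    ∃ p q : List G, l = p ++ q ∧ y = x * p.prod := by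
  induction l generalizing x with
  | nil =>
    simp only [pathFrom, List.mem_singleton] at hy
    exact ⟨[], [], rfl, by simp [hy]⟩
  | cons s t ih =>
    rcases List.mem_cons.mp hy with rfl | hy'
    · exact ⟨[], s :: t, rfl, by simp⟩
    · obtain ⟨p, q, hpq, hyp⟩ := ih hy'
      exact ⟨s :: p, q, by rw [hpq]; rfl, by rw [hyp, List.prod_cons, mul_assoc]⟩

lemma mem_pathFrom_append {u v : List G} {x y : G}
    (hy : y ∈ pathFrom x (u ++ v)) :
    y ∈ pathFrom x u ∨ y ∈ pathFrom (x * u.prod) v := by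
  induction u generalizing x with
  | nil => right; simpa using hy
  | cons s t ih =>
    rcases List.mem_cons.mp hy with rfl | hy'
    · left
      exact List.mem_cons_self
    · rcases ih hy' with h | h
      · exact Or.inl (List.mem_cons_of_mem x h)
      · right
        rwa [List.prod_cons, ← mul_assoc]

lemma mem_pathFrom_map {M N : Type*} [Group M] [Group N] (f : M →* N)
    {w : List M} {x y : N} (hy : y ∈ pathFrom x (w.map f)) :
    ∃ u : M, y = x * f u := by
  induction w generalizing x with
  | nil =>
    simp only [List.map_nil, pathFrom, List.mem_singleton] at hy
    exact ⟨1, by simp [hy]⟩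
  | cons s t ih =>
    rcases List.mem_cons.mp hy with rfl | hy'
    · exact ⟨1, by simp⟩
    · obtain ⟨u, hu⟩ := ih hy'
      exact ⟨s * u, by rw [hu, map_mul, mul_assoc]⟩

lemma wordLength_mem_pathFrom (hS : HasWords S) {w : List G}
    (hw : ∀ s ∈ w, s ∈ S ∨ s⁻¹ ∈ S) {x y : G} (hy : y ∈ pathFrom x w) :
    wordLength S x ≤ wordLength S y + w.length ∧
      wordLength S (x * w.prod) ≤ wordLength S y + w.length := by
  obtain ⟨p, q, rfl, rfl⟩ := mem_pathFrom hy
  have hp : ∀ s ∈ p, s ∈ S ∨ s⁻¹ ∈ S := fun s hs => hw s (List.mem_append_left q hs)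
  have hq : ∀ s ∈ q, s ∈ S ∨ s⁻¹ ∈ S := fun s hs => hw s (List.mem_append_right p hs)
  have hpl : wordLength S p.prod ≤ p.length := wordLength_le hp
  have hql : wordLength S q.prod ≤ q.length := wordLength_le hq
  constructor
  · have h1 : wordLength S x ≤ wordLength S (x * p.prod) + wordLength S p.prod := by
      have := wordLength_mul_le hS (x * p.prod) p.prod⁻¹
      rw [mul_assoc, mul_inv_cancel, mul_one, wordLength_inv hS] at this
      exact this
    have hlen : p.length ≤ (p ++ q).length := by simp
    omega
  · have h2 : wordLength S (x * (p ++ q).prod) ≤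
        wordLength S (x * p.prod) + wordLength S q.prod := by
      rw [List.prod_append, ← mul_assoc]
      exact wordLength_mul_le hS _ _
    have hlen : q.length ≤ (p ++ q).length := by simp
    omega

end Path

section Main
variable {G H : Type*} [Group G] [Group H]

lemma main_path [Infinite G] [Infinite H]
    (SG : Set G) (SH : Set H) (hSGfin : SG.Finite) (hSHfin : SH.Finite)
    (hgenG : Subgroup.closure SG = ⊤) (hgenH : Subgroup.closure SH = ⊤)
    (hext : ∀ (h : H) (n : ℕ), wordLength SH h ≤ n →
      ∃ k : H, wordLength SH (h * k) = n ∧ wordLength SH h + wordLength SH k = n) :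
    ∀ n : ℕ, 0 < n → ∀ (g₁ g₂ : G) (h₁ h₂ : H),
      wordLength (prodGenSet SG SH) (g₁, h₁) = n →
      wordLength (prodGenSet SG SH) (g₂, h₂) = n →
      ∃ l : List (G × H), l.Chain' (CayleyAdj (prodGenSet SG SH)) ∧
        l.head? = some (g₁, h₁) ∧ l.getLast? = some (g₂, h₂) ∧
        (∀ x ∈ l, n ≤ wordLength (prodGenSet SG SH) x) ∧
        l.length ≤ 8 * n + 1 := by
  intro n hn g₁ g₂ h₁ h₂ hw1 hw2
  have hG : HasWords SG := hasWords_of_closure hgenG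
  have hH : HasWords SH := hasWords_of_closure hgenH
  have hP : HasWords (prodGenSet SG SH) := hG.prodGen hH
  rw [wordLength_prod hG hH] at hw1 hw2
  obtain ⟨k₁, hk₁n, hk₁sum⟩ := hext h₁ n (by omega)
  obtain ⟨k₂, hk₂n, hk₂sum⟩ := hext h₂ n (by omega)
  obtain ⟨gs, hgs⟩ := exists_wordLength_eq hG hSGfin n
  obtain ⟨w1, hw1w, hw1p, hw1l⟩ := exists_word hH k₁
  obtain ⟨w2, hw2w, hw2p, hw2l⟩ := exists_word hG g₁⁻¹
  obtain ⟨w3, hw3w, hw3p, hw3l⟩ := exists_word hG gs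
  obtain ⟨w4, hw4w, hw4p, hw4l⟩ := exists_word hH (h₁ * k₁)⁻¹
  obtain ⟨w5, hw5w, hw5p, hw5l⟩ := exists_word hH (h₂ * k₂)
  obtain ⟨w6, hw6w, hw6p, hw6l⟩ := exists_word hG gs⁻¹
  obtain ⟨w7, hw7w, hw7p, hw7l⟩ := exists_word hG g₂
  obtain ⟨w8, hw8w, hw8p, hw8l⟩ := exists_word hH k₂⁻¹
  set fι := MonoidHom.inl G H with hfι
  set fκ := MonoidHom.inr G H with hfκ
  set E1 := w1.map fκ with hE1
  set E2 := w2.map fι with hE2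
  set E3 := w3.map fι with hE3
  set E4 := w4.map fκ with hE4
  set E5 := w5.map fκ with hE5
  set E6 := w6.map fι with hE6
  set E7 := w7.map fι with hE7
  set E8 := w8.map fκ with hE8
  set W := E1 ++ (E2 ++ (E3 ++ (E4 ++ (E5 ++ (E6 ++ (E7 ++ E8)))))) with hW
  -- products of the segments
  have hp1 : E1.prod = ((1 : G), k₁) := by rw [hE1, List.prod_hom w1 fκ, hw1p]; rfl
  have hp2 : E2.prod = ((g₁⁻¹ : G), (1 : H)) := by rw [hE2, List.prod_hom w2 fι, hw2p]; rfl
  have hp3 : E3.prod = ((gs : G), (1 : H)) := by rw [hE3, List.prod_hom w3 fι, hw3p]; rfl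
  have hp4 : E4.prod = ((1 : G), (h₁ * k₁)⁻¹) := by rw [hE4, List.prod_hom w4 fκ, hw4p]; rfl
  have hp5 : E5.prod = ((1 : G), h₂ * k₂) := by rw [hE5, List.prod_hom w5 fκ, hw5p]; rfl
  have hp6 : E6.prod = ((gs⁻¹ : G), (1 : H)) := by rw [hE6, List.prod_hom w6 fι, hw6p]; rfl
  have hp7 : E7.prod = ((g₂ : G), (1 : H)) := by rw [hE7, List.prod_hom w7 fι, hw7p]; rfl
  have hp8 : E8.prod = ((1 : G), k₂⁻¹) := by rw [hE8, List.prod_hom w8 fκ, hw8p]; rfl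
  -- the intermediate points
  have hx2 : ((g₁, h₁) : G × H) * E1.prod = (g₁, h₁ * k₁) := by
    rw [hp1, Prod.mk_mul_mk, mul_one]
  have hx3 : ((g₁, h₁ * k₁) : G × H) * E2.prod = (1, h₁ * k₁) := by
    rw [hp2, Prod.mk_mul_mk, mul_one, mul_inv_cancel]
  have hx4 : (((1 : G), h₁ * k₁) : G × H) * E3.prod = (gs, h₁ * k₁) := by
    rw [hp3, Prod.mk_mul_mk, one_mul, mul_one]
  have hx5 : ((gs, h₁ * k₁) : G × H) * E4.prod = (gs, 1) := by
    rw [hp4, Prod.mk_mul_mk, mul_one, mul_inv_cancel]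
  have hx6 : ((gs, (1 : H)) : G × H) * E5.prod = (gs, h₂ * k₂) := by
    rw [hp5, Prod.mk_mul_mk, mul_one, one_mul]
  have hx7 : ((gs, h₂ * k₂) : G × H) * E6.prod = (1, h₂ * k₂) := by
    rw [hp6, Prod.mk_mul_mk, mul_one, mul_inv_cancel]
  have hx8 : (((1 : G), h₂ * k₂) : G × H) * E7.prod = (g₂, h₂ * k₂) := by
    rw [hp7, Prod.mk_mul_mk, one_mul, mul_one]
  have hx9 : ((g₂, h₂ * k₂) : G × H) * E8.prod = (g₂, h₂) := by
    rw [hp8, Prod.mk_mul_mk, mul_one, mul_assoc, mul_inv_cancel, mul_one]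
  -- word conditions
  have hE1w := isWord_map_inr (SG := SG) hw1w
  have hE2w := isWord_map_inl (SH := SH) hw2w
  have hE3w := isWord_map_inl (SH := SH) hw3w
  have hE4w := isWord_map_inr (SG := SG) hw4w
  have hE5w := isWord_map_inr (SG := SG) hw5w
  have hE6w := isWord_map_inl (SH := SH) hw6w
  have hE7w := isWord_map_inl (SH := SH) hw7w
  have hE8w := isWord_map_inr (SG := SG) hw8w
  have hWw : ∀ s ∈ W, s ∈ prodGenSet SG SH ∨ s⁻¹ ∈ prodGenSet SG SH := by
    intro s hs
    rw [hW] at hs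
    simp only [List.mem_append] at hs
    rcases hs with h|h|h|h|h|h|h|h
    exacts [hE1w s h, hE2w s h, hE3w s h, hE4w s h, hE5w s h, hE6w s h, hE7w s h, hE8w s h]
  refine ⟨pathFrom (g₁, h₁) W, chain'_pathFrom hWw _, head?_pathFrom W _, ?_, ?_, ?_⟩
  · rw [getLast?_pathFrom]
    congr 1
    rw [hW]
    simp only [List.prod_append]
    rw [← mul_assoc, ← mul_assoc, ← mul_assoc, ← mul_assoc, ← mul_assoc, ← mul_assoc,
      ← mul_assoc, hx2, hx3, hx4, hx5, hx6, hx7, hx8, hx9]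
  · intro y hy
    have hsplit1 := mem_pathFrom_append (x := ((g₁, h₁) : G × H)) (u := E1) hy
    rw [hx2] at hsplit1
    rcases hsplit1 with h | hy2
    · -- segment 1
      have := (wordLength_mem_pathFrom hP hE1w h).2
      rw [hx2, wordLength_prod hG hH] at this
      have hylen : E1.length = wordLength SH k₁ := by rw [hE1, List.length_map, hw1l]
      rw [hylen] at this
      omega
    rcases mem_pathFrom_append hy2 with h | hy3
    · -- segment 2
      have := (wordLength_mem_pathFrom hP hE2w h).1
      rw [wordLength_prod hG hH] at this
      have hylen : E2.length = wordLength SG g₁ := by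
        rw [hE2, List.length_map, hw2l, wordLength_inv hG]
      rw [hylen] at this
      omega
    rw [hx3] at hy3
    rcases mem_pathFrom_append hy3 with h | hy4
    · -- segment 3
      obtain ⟨u, rfl⟩ := mem_pathFrom_map fι h
      have hyval : (((1 : G), h₁ * k₁) : G × H) * fι u = (u, h₁ * k₁) := by
        rw [hfι, MonoidHom.inl_apply, Prod.mk_mul_mk, one_mul, mul_one]
      rw [hyval, wordLength_prod hG hH]
      omega
    rw [hx4] at hy4
    rcases mem_pathFrom_append hy4 with h | hy5
    · -- segment 4
      obtain ⟨u, rfl⟩ := mem_pathFrom_map fκ h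
      have hyval : ((gs, h₁ * k₁) : G × H) * fκ u = (gs, (h₁ * k₁) * u) := by
        rw [hfκ, MonoidHom.inr_apply, Prod.mk_mul_mk, mul_one]
      rw [hyval, wordLength_prod hG hH]
      omega
    rw [hx5] at hy5
    rcases mem_pathFrom_append hy5 with h | hy6
    · -- segment 5
      obtain ⟨u, rfl⟩ := mem_pathFrom_map fκ h
      have hyval : ((gs, (1 : H)) : G × H) * fκ u = (gs, u) := by
        rw [hfκ, MonoidHom.inr_apply, Prod.mk_mul_mk, mul_one, one_mul]
      rw [hyval, wordLength_prod hG hH]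
      omega
    rw [hx6] at hy6
    rcases mem_pathFrom_append hy6 with h | hy7
    · -- segment 6
      obtain ⟨u, rfl⟩ := mem_pathFrom_map fι h
      have hyval : ((gs, h₂ * k₂) : G × H) * fι u = (gs * u, h₂ * k₂) := by
        rw [hfι, MonoidHom.inl_apply, Prod.mk_mul_mk, mul_one]
      rw [hyval, wordLength_prod hG hH]
      omega
    rw [hx7] at hy7
    rcases mem_pathFrom_append hy7 with h | hy8
    · -- segment 7
      obtain ⟨u, rfl⟩ := mem_pathFrom_map fι h
      have hyval : (((1 : G), h₂ * k₂) : G × H) * fι u = (u, h₂ * k₂) := by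
        rw [hfι, MonoidHom.inl_apply, Prod.mk_mul_mk, one_mul, mul_one]
      rw [hyval, wordLength_prod hG hH]
      omega
    rw [hx8] at hy8
    -- segment 8
    have := (wordLength_mem_pathFrom hP hE8w hy8).1
    rw [wordLength_prod hG hH] at this
    have hylen : E8.length = wordLength SH k₂ := by
      rw [hE8, List.length_map, hw8l, wordLength_inv hH]
    rw [hylen] at this
    omega
  · rw [length_pathFrom, hW]
    simp only [List.length_append, hE1, hE2, hE3, hE4, hE5, hE6, hE7, hE8, List.length_map]
    have e2 : wordLength SG g₁⁻¹ = wordLength SG g₁ := wordLength_inv hG g₁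
    have e4 : wordLength SH (h₁ * k₁)⁻¹ = wordLength SH (h₁ * k₁) := wordLength_inv hH _
    have e6 : wordLength SG gs⁻¹ = wordLength SG gs := wordLength_inv hG gs
    have e8 : wordLength SH k₂⁻¹ = wordLength SH k₂ := wordLength_inv hH k₂
    omega

end Main

/-- For infinite f.g. groups `G`, `H` with `H` having extendable geodesics, any two points
on the `n`-sphere of `G × H` are joined by a path of length at most `8n` avoiding the open
`n`-ball about the identity; consequently the divergence `δ₁` of `G × H` is linear. -/
theorem product_divergence_linear {G H : Type*} [Group G] [Group H]
    [Infinite G] [Infinite H]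
    (SG : Set G) (SH : Set H) (hSGfin : SG.Finite) (hSHfin : SH.Finite)
    (hgenG : Subgroup.closure SG = ⊤) (hgenH : Subgroup.closure SH = ⊤)
    (hext : ∀ (h : H) (n : ℕ), wordLength SH h ≤ n →
      ∃ k : H, wordLength SH (h * k) = n ∧ wordLength SH h + wordLength SH k = n) :
    (∀ n : ℕ, 0 < n → ∀ (g₁ g₂ : G) (h₁ h₂ : H),
      wordLength (prodGenSet SG SH) (g₁, h₁) = n →
      wordLength (prodGenSet SG SH) (g₂, h₂) = n →
      ∃ l : List (G × H), l.Chain' (CayleyAdj (prodGenSet SG SH)) ∧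
        l.head? = some (g₁, h₁) ∧ l.getLast? = some (g₂, h₂) ∧
        (∀ x ∈ l, n ≤ wordLength (prodGenSet SG SH) x) ∧
        l.length ≤ 8 * n + 1) ∧
    (∃ C₂ : ℝ, 1 ≤ C₂ ∧ ∀ n : ℕ, 0 < n → ∀ (g₁ g₂ : G) (h₁ h₂ : H),
      wordLength (prodGenSet SG SH) (g₁, h₁) = n →
      wordLength (prodGenSet SG SH) (g₂, h₂) = n →
      ∃ l : List (G × H), l.Chain' (CayleyAdj (prodGenSet SG SH)) ∧
        l.head? = some (g₁, h₁) ∧ l.getLast? = some (g₂, h₂) ∧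
        (∀ x ∈ l, n ≤ wordLength (prodGenSet SG SH) x) ∧
        ((l.length : ℝ) - 1 ≤ C₂ * n + C₂)) := by
  have hmain := main_path SG SH hSGfin hSHfin hgenG hgenH hext
  refine ⟨hmain, 8, by norm_num, ?_⟩
  intro n hn g₁ g₂ h₁ h₂ hw1 hw2
  obtain ⟨l, hc, hh, hl, hb, hlen⟩ := hmain n hn g₁ g₂ h₁ h₂ hw1 hw2
  refine ⟨l, hc, hh, hl, hb, ?_⟩
  have : (l.length : ℝ) ≤ 8 * n + 1 := by exact_mod_cast hlen
  push_cast
  linarith
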